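/- Define convolved Pell numbers by P_N^{(0)} = P_N and P_N^{(s)} = ∑_{j=0}^{N-1} P_{j+1} · P_{N-j}^{(s-1)} for s ≥ 1. Then for all N ≥ 1 and s ≥ 0, P_N^{(s)} = ((-i)^(N-1) / (2^s · s!)) · U_{N+s-1}^{(s)}(i). -/

import Mathlib

/-- The Pell numbers: `P_0 = 0`, `P_1 = 1`, `P_{n+2} = 2 P_{n+1} + P_n`. -/
def pell : ℕ → ℕ
  | 0 => 0
  | 1 => 1
  | n + 2 => 2 * pell (n + 1) + pell n

/-- Convolved Pell numbers: `pellConv 0 N = P_N`,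
`pellConv s N = ∑_{j=0}^{N-1} P_{j+1} · pellConv (s-1) (N-j)`. -/
def pellConv : ℕ → ℕ → ℕ
  | 0, N => pell N
  | s + 1, N => ∑ j ∈ Finset.range N, pell (j + 1) * pellConv s (N - j)

open Polynomial Polynomial.Chebyshev Complex

theorem pell_rec (n : ℕ) : pell (n+2) = 2 * pell (n+1) + pell n := rfl

theorem pc1 : ∀ s, pellConv s 1 = 1
  | 0 => rfl
  | s + 1 => by simp [pellConv, pc1 s, pell]

theorem pc2 : ∀ s, pellConv s 2 = 2 * (s + 1)
  | 0 => rfl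
  | s + 1 => by
    show (∑ j ∈ Finset.range 2, pell (j+1) * pellConv s (2 - j)) = _
    rw [Finset.sum_range_succ, Finset.sum_range_succ]
    simp [pc1 s, pc2 s, pell]
    ring

theorem pcrec (s N : ℕ) : pellConv (s+1) (N+2) =
    2 * pellConv (s+1) (N+1) + pellConv (s+1) N + pellConv s (N+2) := by
  show (∑ j ∈ Finset.range (N+2), pell (j+1) * pellConv s (N+2-j)) = _
  rw [Finset.sum_range_succ' _ (N+1), Finset.sum_range_succ' _ N]
  have h : ∑ j ∈ Finset.range N, pell (j+1+1+1) * pellConv s (N+2-(j+1+1)) =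
      ∑ j ∈ Finset.range N, (2*(pell (j+2) * pellConv s (N-j)) + pell (j+1) * pellConv s (N-j)) :=
    Finset.sum_congr rfl (fun j _ => by
      rw [show N+2-(j+1+1) = N-j by omega, pell_rec]; ring)
  rw [h, Finset.sum_add_distrib]
  show _ + _ + pell 2 * pellConv s (N+2-1) + pell 1 * pellConv s (N+2) = _
  simp only [pellConv, pell]
  rw [Finset.sum_range_succ' _ N]
  have h2 : ∑ j ∈ Finset.range N, pell (j+1+1) * pellConv s (N+1-(j+1)) =
      ∑ j ∈ Finset.range N, pell (j+2) * pellConv s (N-j) :=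
    Finset.sum_congr rfl (fun j _ => by rw [show N+1-(j+1) = N-j by omega])
  rw [h2, show N+2-1 = N+1 from rfl]
  simp only [pell_rec]
  rw [← Finset.mul_sum]
  simp only [show pell 1 = 1 from rfl, Nat.sub_zero]
  ring

theorem durec (s : ℕ) (n : ℤ) :
    derivative^[s+1] (U ℂ (n+2)) =
      2 * X * derivative^[s+1] (U ℂ (n+1)) + ((2*(s+1) : ℕ) : ℂ[X]) * derivative^[s] (U ℂ (n+1))
        - derivative^[s+1] (U ℂ n) := by
  induction s with
  | zero =>
    simp only [zero_add, Function.iterate_one, Function.iterate_zero, id_eq, U_add_two]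
    rw [derivative_sub, derivative_mul, derivative_mul]
    simp only [derivative_ofNat, derivative_X]
    push_cast
    ring
  | succ s ih =>
    rw [Function.iterate_succ_apply', ih]
    simp only [derivative_sub, derivative_add, derivative_mul, derivative_natCast,
      derivative_ofNat, derivative_X, ← Function.iterate_succ_apply']
    push_cast
    ring

theorem UdegLe : ∀ m : ℕ, (U ℂ (m:ℤ)).natDegree ≤ m
  | 0 => by simp [U_zero]
  | 1 => by
    rw [show ((1:ℕ):ℤ) = 1 by norm_num, U_one]
    exact (natDegree_mul_le).trans (by simp [natDegree_X_le])
  | m + 2 => by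
    rw [show ((m+2:ℕ):ℤ) = (m:ℤ)+2 by push_cast; ring, U_add_two]
    refine (natDegree_sub_le _ _).trans (max_le ?_ ?_)
    · refine (natDegree_mul_le).trans ?_
      have h1 : (2 * X : ℂ[X]).natDegree ≤ 1 :=
        (natDegree_mul_le).trans (by simp [natDegree_X_le])
      have h2 := UdegLe (m+1); push_cast at h2
      omega
    · exact (UdegLe m).trans (by omega)

theorem Zder (s m : ℕ) (h : m < s) : derivative^[s] (U ℂ (m:ℤ)) = 0 :=
  Polynomial.iterate_derivative_eq_zero ((UdegLe m).trans_lt h)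

theorem edurec (s : ℕ) (n : ℤ) :
    (derivative^[s+1] (U ℂ (n+2))).eval I =
      2 * I * (derivative^[s+1] (U ℂ (n+1))).eval I
        + (2*(s+1) : ℕ) * (derivative^[s] (U ℂ (n+1))).eval I
        - (derivative^[s+1] (U ℂ n)).eval I := by
  rw [durec]
  simp

theorem A1 : ∀ s : ℕ, (derivative^[s] (U ℂ (s:ℤ))).eval I = 2^s * s.factorial
  | 0 => by simp [U_zero]
  | 1 => by
    rw [show ((1:ℕ):ℤ) = 1 by norm_num, U_one]
    simp [derivative_mul]
  | s + 2 => by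
    rw [show ((s+2:ℕ):ℤ) = (s:ℤ)+2 by push_cast; ring, edurec (s+1) (s:ℤ)]
    rw [show ((s:ℤ)+1) = ((s+1:ℕ):ℤ) by push_cast; ring]
    rw [Zder (s+2) (s+1) (by omega), Zder (s+2) s (by omega), A1 (s+1)]
    simp [Nat.factorial_succ]
    ring

theorem A2 : ∀ s : ℕ, (derivative^[s] (U ℂ ((s:ℤ)+1))).eval I = 2^(s+1) * (s+1).factorial * I
  | 0 => by
    rw [show ((0:ℕ):ℤ)+1 = 1 by norm_num, U_one]
    simp
  | s + 1 => by
    rw [show ((s+1:ℕ):ℤ)+1 = (s:ℤ)+1+1 by push_cast; ring]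
    rw [show ((s:ℤ)+1+1) = (s:ℤ)+2 by ring, edurec s (s:ℤ)]
    rw [show ((s:ℤ)+1) = ((s+1:ℕ):ℤ) by push_cast; ring]
    rw [Zder (s+1) s (by omega), A1 (s+1)]
    have h := A2 s
    rw [show ((s:ℤ)+1) = ((s+1:ℕ):ℤ) by push_cast; ring] at h
    rw [h]
    simp [Nat.factorial_succ]
    ring

theorem pell_U : ∀ N : ℕ, (pell (N+1) : ℂ) * I ^ N = (U ℂ (N:ℤ)).eval I
  | 0 => by simp [U_zero, pell]
  | 1 => by
    rw [show ((1:ℕ):ℤ) = 1 by norm_num, U_one]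
    norm_num [pell]
  | N + 2 => by
    rw [show ((N+2:ℕ):ℤ) = (N:ℤ)+2 by push_cast; ring, U_add_two]
    simp only [eval_sub, eval_mul, eval_ofNat, eval_X]
    rw [show ((N:ℤ)+1) = ((N+1:ℕ):ℤ) by push_cast; ring, ← pell_U (N+1), ← pell_U N,
      pell_rec]
    push_cast
    linear_combination (pell (N+1) : ℂ) * I ^ N * Complex.I_sq

theorem key : ∀ (s N : ℕ),
    ((2:ℂ)^s * s.factorial) * I^N * pellConv s (N+1) =
      (derivative^[s] (U ℂ ((N+s : ℕ):ℤ))).eval I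
  | 0, N => by
    simp only [pow_zero, Nat.factorial_zero, Nat.cast_one, mul_one, one_mul, add_zero,
      Function.iterate_zero, id_eq, pellConv]
    rw [← pell_U N]
    ring
  | s+1, 0 => by
    rw [pc1, show (0+(s+1)) = s+1 by omega, A1 (s+1)]
    push_cast
    ring
  | s+1, 1 => by
    rw [pc2, show ((1+(s+1):ℕ):ℤ) = ((s+1:ℕ):ℤ)+1 by push_cast; ring]
    have h := A2 (s+1)
    rw [show ((s+1:ℕ):ℤ) = (s:ℤ)+1 by push_cast; ring] at h ⊢
    rw [h]
    simp [Nat.factorial_succ]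
    ring
  | s+1, N+2 => by
    have h1 := key (s+1) (N+1)
    rw [show (N+1+(s+1)) = N+s+2 by omega] at h1
    have h2 := key (s+1) N
    rw [show (N+(s+1)) = N+s+1 by omega] at h2
    have h3 := key s (N+2)
    rw [show (N+2+s) = N+s+2 by omega] at h3
    rw [show ((N+2+(s+1):ℕ):ℤ) = ((N+s+1:ℕ):ℤ)+2 by push_cast; ring,
      edurec s ((N+s+1:ℕ):ℤ),
      show ((N+s+1:ℕ):ℤ)+1 = ((N+s+2:ℕ):ℤ) by push_cast; ring,
      ← h1, ← h2, ← h3, pcrec s (N+1)]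
    simp only [Nat.factorial_succ]
    push_cast
    linear_combination ((2:ℂ)^(s+1) * ((s:ℂ)+1) * (s.factorial : ℂ)
      * (pellConv (s+1) (N+1) : ℂ) * I^N) * Complex.I_sq
  termination_by s N => (s, N)

theorem stmt12 (N s : ℕ) (hN : 1 ≤ N) :
    (pellConv s N : ℂ) =
      (-Complex.I) ^ (N - 1) / (2 ^ s * s.factorial) *
        (Polynomial.derivative^[s] (Polynomial.Chebyshev.U ℂ (N + s - 1))).eval Complex.I := by
  obtain ⟨M, rfl⟩ : ∃ M, N = M + 1 := ⟨N - 1, by omega⟩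
  rw [show ((M+1:ℕ):ℤ) + (s:ℤ) - 1 = ((M+s:ℕ):ℤ) by push_cast; ring,
    Nat.add_sub_cancel, ← key s M]
  have hc : ((2:ℂ)^s * s.factorial) ≠ 0 :=
    mul_ne_zero (pow_ne_zero _ two_ne_zero) (Nat.cast_ne_zero.mpr s.factorial_ne_zero)
  have hI : (I:ℂ)^(M*2) * (-1)^M = 1 := by
    rw [pow_mul', I_sq, ← mul_pow]; norm_num
  field_simp
  linear_combination (-((pellConv s (M+1) : ℂ) * (s.factorial:ℂ) * (s.factorial:ℂ)⁻¹)) * hI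
    - (pellConv s (M+1) : ℂ) * mul_inv_cancel₀ (Nat.cast_ne_zero.mpr s.factorial_ne_zero : (s.factorial:ℂ) ≠ 0)
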